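/- Let v₁ = (1,0,0), v₂ = (0,1,0), v₃ = (1,−3,5), v₄ = (−2,2,−5) in ℤ³, and let f : ℤ³ → ℤ⁴ be the additive group homomorphism sending t ∈ ℤ³ to (⟨t,v₁⟩, ⟨t,v₂⟩, ⟨t,v₃⟩, ⟨t,v₄⟩), where ⟨·,·⟩ denotes the standard dot product on ℤ³. Then the cokernel ℤ⁴ / f(ℤ³) is isomorphic, as an abelian group, to ℤ ⊕ ℤ/5ℤ. -/
import Mathlib


/-- The cokernel of the map `ℤ³ → ℤ⁴`, `t ↦ (⟨t,v₁⟩, ⟨t,v₂⟩, ⟨t,v₃⟩, ⟨t,v₄⟩)` for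
`v₁ = (1,0,0)`, `v₂ = (0,1,0)`, `v₃ = (1,−3,5)`, `v₄ = (−2,2,−5)`
is isomorphic to `ℤ ⊕ ℤ/5ℤ`. -/
theorem stmt_2
    (v : Fin 4 → Fin 3 → ℤ)
    (hv : v = ![![1, 0, 0], ![0, 1, 0], ![1, -3, 5], ![-2, 2, -5]])
    (f : (Fin 3 → ℤ) →+ (Fin 4 → ℤ))
    (hf : ∀ (t : Fin 3 → ℤ) (i : Fin 4), f t i = ∑ m, t m * v i m) :
    Nonempty (((Fin 4 → ℤ) ⧸ f.range) ≃+ (ℤ × ZMod 5)) := by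
  subst hv
  have hf' : ∀ t : Fin 3 → ℤ, f t = ![t 0, t 1, t 0 - 3 * t 1 + 5 * t 2,
      -2 * t 0 + 2 * t 1 - 5 * t 2] := by
    intro t
    funext i
    rw [hf]
    fin_cases i <;> simp [Fin.sum_univ_succ] <;> ring
  let g : (Fin 4 → ℤ) →+ ℤ × ZMod 5 :=
    { toFun := fun x => (x 0 + x 1 + x 2 + x 3, ((-(x 0) + 3 * x 1 + x 2 : ℤ) : ZMod 5)),
      map_zero' := by simp
      map_add' := by
        intro a b
        simp only [Pi.add_apply, Prod.mk_add_mk, Prod.mk.injEq]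
        constructor
        · ring
        · push_cast; ring }
  have hker : f.range = g.ker := by
    ext x
    constructor
    · rintro ⟨t, rfl⟩
      rw [hf' t]
      show ((_ : ℤ), ((_ : ℤ) : ZMod 5)) = (0, 0)
      simp only [Matrix.cons_val_zero, Matrix.cons_val_one, Matrix.head_cons,
        Matrix.cons_val_two, Matrix.tail_cons, Matrix.cons_val_three, Prod.mk.injEq]
      constructor
      · ring
      · have : (-(t 0) + 3 * t 1 + (t 0 - 3 * t 1 + 5 * t 2) : ℤ) = 5 * t 2 := by ring
        rw [this, ZMod.intCast_zmod_eq_zero_iff_dvd]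
        exact ⟨t 2, rfl⟩
    · intro hx
      have h1 : x 0 + x 1 + x 2 + x 3 = 0 := congrArg Prod.fst hx
      have h2 : ((-(x 0) + 3 * x 1 + x 2 : ℤ) : ZMod 5) = 0 := congrArg Prod.snd hx
      have h3 : (5 : ℤ) ∣ (-(x 0) + 3 * x 1 + x 2) := by
        rwa [ZMod.intCast_zmod_eq_zero_iff_dvd] at h2
      obtain ⟨k, hk⟩ := h3
      refine ⟨![x 0, x 1, k], ?_⟩
      rw [hf']
      funext i
      fin_cases i <;> simp <;> omega
  refine ⟨(QuotientAddGroup.quotientAddEquivOfEq hker).trans ?_⟩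
  refine QuotientAddGroup.quotientKerEquivOfSurjective g ?_
  rintro ⟨m, c⟩
  refine ⟨![0, 0, (c.val : ℤ), m - c.val], ?_⟩
  show ((_ : ℤ), ((_ : ℤ) : ZMod 5)) = (m, c)
  simp only [Matrix.cons_val_zero, Matrix.cons_val_one, Matrix.head_cons,
    Matrix.cons_val_two, Matrix.tail_cons, Matrix.cons_val_three, Prod.mk.injEq]
  constructor
  · ring
  · push_cast
    simp [ZMod.natCast_val, ZMod.cast_id]
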